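/- Let A be the n-by-n reciprocal matrix of block form [[B, J],[J, J]], n >= 4, where B is the 3-by-3 reciprocal matrix with above-diagonal entries a_{12}, a_{13}, a_{23}, a_{13} >= 1. If a_{12} >= 1, a_{23} <= 1, and a_{13} - a_{23} a_{12} >= 0, then the Perron eigenvector of A is efficient for A. -/
import Mathlib


/-- A positive reciprocal (pairwise comparison) matrix. -/
def Reciprocal {n : ℕ} (A : Matrix (Fin n) (Fin n) ℝ) : Prop :=
  (∀ i j, 0 < A i j) ∧ ∀ i j, A j i = (A i j)⁻¹

/-- A positive vector `w` is efficient for `A` (Pareto optimality). -/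
def Efficient {n : ℕ} (A : Matrix (Fin n) (Fin n) ℝ) (w : Fin n → ℝ) : Prop :=
  (∀ i, 0 < w i) ∧ ∀ v : Fin n → ℝ, (∀ i, 0 < v i) →
    (∀ i j, |A i j - v i / v j| ≤ |A i j - w i / w j|) →
    ∀ i j, v i / v j = w i / w j

set_option maxHeartbeats 1600000 in
/-- Sufficient condition (case 2) for the efficiency of the Perron eigenvector
of a 3-block perturbed consistent matrix:
`a₁₂ ≥ 1`, `a₂₃ ≤ 1` and `q = a₁₃ - a₂₃ a₁₂ ≥ 0`. -/
theorem stmt_16 {n : ℕ} (hn : 4 ≤ n) (A : Matrix (Fin n) (Fin n) ℝ)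
    (hA : Reciprocal A)
    (hblock : ∀ i j : Fin n, 3 ≤ i.val ∨ 3 ≤ j.val → A i j = 1)
    (hdiag : ∀ i, A i i = 1)
    (a12 a13 a23 : ℝ)
    (h12 : A ⟨0, by omega⟩ ⟨1, by omega⟩ = a12)
    (h13 : A ⟨0, by omega⟩ ⟨2, by omega⟩ = a13)
    (h23 : A ⟨1, by omega⟩ ⟨2, by omega⟩ = a23)
    (ha13 : 1 ≤ a13) (ha12 : 1 ≤ a12) (ha23 : a23 ≤ 1)
    (hq : 0 ≤ a13 - a23 * a12)
    (w : Fin n → ℝ) (hw : ∀ i, 0 < w i) (μ : ℝ)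
    (heig : A.mulVec w = μ • w) :
    Efficient A w := by
  obtain ⟨hpos, hrec⟩ := hA
  have i0 : Fin n := ⟨0, by omega⟩
  -- use explicit anonymous constructors throughout
  set I0 : Fin n := ⟨0, by omega⟩ with hI0
  set I1 : Fin n := ⟨1, by omega⟩ with hI1
  set I2 : Fin n := ⟨2, by omega⟩ with hI2
  set I3 : Fin n := ⟨3, by omega⟩ with hI3
  have h12' : A I0 I1 = a12 := h12
  have h13' : A I0 I2 = a13 := h13
  have h23' : A I1 I2 = a23 := h23
  have h21' : A I1 I0 = a12⁻¹ := by rw [hrec I0 I1, h12']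
  have h31' : A I2 I0 = a13⁻¹ := by rw [hrec I0 I2, h13']
  have h32' : A I2 I1 = a23⁻¹ := by rw [hrec I1 I2, h23']
  have ha12p : 0 < a12 := h12' ▸ hpos I0 I1
  have ha13p : 0 < a13 := h13' ▸ hpos I0 I2
  have ha23p : 0 < a23 := h23' ▸ hpos I1 I2
  have heig' : ∀ i, ∑ j, A i j * w j = μ * w i := by
    intro i
    have := congrFun heig i
    simpa [Matrix.mulVec, dotProduct, smul_eq_mul] using this
  have hμ : 0 < μ := by
    have h3 := heig' I3
    have hS : ∑ j, A I3 j * w j = ∑ j, w j := by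
      refine Finset.sum_congr rfl fun j _ => ?_
      rw [hblock I3 j (Or.inl (by simp [hI3])), one_mul]
    have hSpos : 0 < ∑ j, w j :=
      Finset.sum_pos (fun j _ => hw j) ⟨I0, Finset.mem_univ _⟩
    rw [hS] at h3
    by_contra h
    push_neg at h
    nlinarith [hw I3]
  -- generic tool: per-term nonnegativity gives eigen inequality
  have key : ∀ (c : ℝ) (i i' : Fin n), (∀ j, 0 ≤ (A i j - c * A i' j) * w j) →
      c * w i' ≤ w i := by
    intro c i i' h
    have h1 : 0 ≤ ∑ j, (A i j - c * A i' j) * w j :=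
      Finset.sum_nonneg fun j _ => h j
    have h2 : ∑ j, (A i j - c * A i' j) * w j = μ * w i - c * (μ * w i') := by
      rw [← heig' i, ← heig' i', Finset.mul_sum, ← Finset.sum_sub_distrib]
      exact Finset.sum_congr rfl fun j _ => by ring
    have h3 : μ * (c * w i') ≤ μ * w i := by nlinarith
    exact le_of_mul_le_mul_left h3 hμ
  -- case analysis on an index
  have hcase : ∀ j : Fin n, j = I0 ∨ j = I1 ∨ j = I2 ∨ 3 ≤ j.val := by
    intro j
    rcases Nat.lt_or_ge j.val 3 with hj | hj
    · have : j.val = 0 ∨ j.val = 1 ∨ j.val = 2 := by omega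
      rcases this with h | h | h
      · exact Or.inl (Fin.ext h)
      · exact Or.inr (Or.inl (Fin.ext h))
      · exact Or.inr (Or.inr (Or.inl (Fin.ext h)))
    · exact Or.inr (Or.inr (Or.inr hj))
  -- Fact 1 : w k ≤ w 0 for k ≥ 3
  have f1 : ∀ k : Fin n, 3 ≤ k.val → w k ≤ w I0 := by
    intro k hk
    have := key 1 I0 k ?_
    · linarith
    intro j
    rcases hcase j with rfl | rfl | rfl | hj
    · rw [hdiag I0, hblock k I0 (Or.inl hk)]; simp
    · rw [h12', hblock k I1 (Or.inl hk)]
      have := (hw I1).le; nlinarith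
    · rw [h13', hblock k I2 (Or.inl hk)]
      have := (hw I2).le; nlinarith
    · rw [hblock I0 j (Or.inr hj), hblock k j (Or.inr hj)]; simp
  -- Fact 2 : w 1 ≤ w k for k ≥ 3
  have f2 : ∀ k : Fin n, 3 ≤ k.val → w I1 ≤ w k := by
    intro k hk
    have := key 1 k I1 ?_
    · linarith
    intro j
    rcases hcase j with rfl | rfl | rfl | hj
    · rw [hblock k I0 (Or.inl hk), h21']
      have h1 : a12⁻¹ ≤ 1 := (inv_le_one₀ ha12p).mpr ha12
      have := (hw I0).le; nlinarith
    · rw [hblock k I1 (Or.inl hk), hdiag I1]; simp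
    · rw [hblock k I2 (Or.inl hk), h23']
      have := (hw I2).le; nlinarith
    · rw [hblock k j (Or.inr hj), hblock I1 j (Or.inr hj)]; simp
  -- Fact 3 : a23 * w 2 ≤ w 1
  have f3 : a23 * w I2 ≤ w I1 := by
    refine key a23 I1 I2 ?_
    intro j
    rcases hcase j with rfl | rfl | rfl | hj
    · rw [h21', h31']
      have h1 : 0 ≤ a12⁻¹ - a23 * a13⁻¹ := by
        have : a12⁻¹ - a23 * a13⁻¹ = (a13 - a23 * a12) / (a12 * a13) := by
          field_simp
          try ring
        rw [this]; positivity
      have := (hw I0).le; nlinarith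
    · rw [hdiag I1, h32', mul_inv_cancel₀ (ne_of_gt ha23p)]
      norm_num
    · rw [h23', hdiag I2]; simp
    · rw [hblock I1 j (Or.inr hj), hblock I2 j (Or.inr hj)]
      have := (hw j).le; nlinarith
  -- Fact 4 : a13⁻¹ * w 0 ≤ w 2
  have f4 : a13⁻¹ * w I0 ≤ w I2 := by
    refine key a13⁻¹ I2 I0 ?_
    intro j
    rcases hcase j with rfl | rfl | rfl | hj
    · rw [h31', hdiag I0]; simp
    · rw [h32', h12']
      have h1 : 0 ≤ a23⁻¹ - a13⁻¹ * a12 := by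
        have : a23⁻¹ - a13⁻¹ * a12 = (a13 - a23 * a12) / (a23 * a13) := by
          field_simp
          try ring
        rw [this]; positivity
      have := (hw I1).le; nlinarith
    · rw [hdiag I2, h13', inv_mul_cancel₀ (ne_of_gt ha13p)]
      norm_num
    · rw [hblock I2 j (Or.inr hj), hblock I0 j (Or.inr hj)]
      have h1 : a13⁻¹ ≤ 1 := (inv_le_one₀ ha13p).mpr ha13
      have := (hw j).le; nlinarith
  -- Efficiency
  refine ⟨hw, ?_⟩
  intro v hv hcmp
  -- edge lemma: dominated direction forces ratio monotonicity
  have hr : ∀ i j : Fin n, A i j ≤ w i / w j → v i / w i ≤ v j / w j := by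
    intro i j hij
    have h := hcmp i j
    rw [show |A i j - w i / w j| = w i / w j - A i j by
      rw [abs_of_nonpos (by linarith)]; ring] at h
    have h2 := (abs_le.mp h).1
    have h3 : v i / v j ≤ w i / w j := by linarith
    rw [div_le_div_iff₀ (hv j) (hw j)] at h3
    rw [div_le_div_iff₀ (hw i) (hw j)]
    nlinarith
  have e12 : v I1 / w I1 ≤ v I2 / w I2 := by
    refine hr I1 I2 ?_
    rw [h23', le_div_iff₀ (hw I2)]
    exact f3
  have e20 : v I2 / w I2 ≤ v I0 / w I0 := by
    refine hr I2 I0 ?_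
    rw [h31', le_div_iff₀ (hw I0)]
    exact f4
  have e0k : ∀ k : Fin n, 3 ≤ k.val → v I0 / w I0 ≤ v k / w k := by
    intro k hk
    refine hr I0 k ?_
    rw [hblock I0 k (Or.inr hk), le_div_iff₀ (hw k), one_mul]
    exact f1 k hk
  have ek1 : ∀ k : Fin n, 3 ≤ k.val → v k / w k ≤ v I1 / w I1 := by
    intro k hk
    refine hr k I1 ?_
    rw [hblock k I1 (Or.inl hk), le_div_iff₀ (hw I1), one_mul]
    exact f2 k hk
  have hI3v : (3 : ℕ) ≤ I3.val := by simp [hI3]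
  have e03 := e0k I3 hI3v
  have e31 := ek1 I3 hI3v
  have hkey : ∀ i : Fin n, v i / w i = v I0 / w I0 := by
    intro i
    rcases hcase i with rfl | rfl | rfl | hi
    · rfl
    · linarith
    · linarith
    · have h1 := e0k i hi
      have h2 := ek1 i hi
      linarith
  intro i j
  have hi := hkey i
  have hj := hkey j
  have hvi : v i = (v I0 / w I0) * w i := by
    rw [← hi, div_mul_cancel₀ _ (ne_of_gt (hw i))]
  have hvj : v j = (v I0 / w I0) * w j := by
    rw [← hj, div_mul_cancel₀ _ (ne_of_gt (hw j))]
  have hc : v I0 / w I0 ≠ 0 := ne_of_gt (div_pos (hv I0) (hw I0))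
  rw [hvi, hvj, mul_div_mul_left _ _ hc]
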